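/- Let ρ, c, k, ℓ, γ, D∞ be positive reals, α = k/(ρc), 0 < ε < 1, h₀* = (1/D∞)√(γ(1-ε)ρℓk/2). For h₀ > h₀* let ξ(h₀) > 0 be the unique solution of (D∞c/(ℓ√π))·exp(-x²)/(k/(h₀√(πα)) + erf(x)) = x + (γ(1-ε)√π/(2D∞))·(k/(h₀√(πα)) + erf(x))·exp(x²), and let ξ∞ > 0 be the unique solution of the corresponding equation with h₀ = ∞ (i.e. with k/(h₀√(πα)) replaced by 0). Then ξ(h₀) < ξ∞ for all h₀ > h₀*, and ξ∞ - ξ(h₀) = O(1/h₀) as h₀ → +∞, i.e. there exist constants C > 0 and H > 0 such that 0 < ξ∞ - ξ(h₀) ≤ C/h₀ for all h₀ ≥ H. -/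

import Mathlib

open Real Filter Set Topology

/-- The error function `erf x = (2/√π) ∫₀ˣ exp(-t²) dt`. -/
noncomputable def erf (x : ℝ) : ℝ := (2 / Real.sqrt π) * ∫ t in (0:ℝ)..x, Real.exp (-t ^ 2)

lemma erf_aux_cont : Continuous fun t : ℝ => Real.exp (-t ^ 2) := by continuity

lemma erf_aux_mono : Monotone erf := by
  intro a b hab
  have hint : ∀ u v : ℝ, IntervalIntegrable (fun t => Real.exp (-t ^ 2)) MeasureTheory.volume u v :=
    fun u v => erf_aux_cont.intervalIntegrable u v
  have hadd := intervalIntegral.integral_add_adjacent_intervals (hint 0 a) (hint a b)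
  have hnn : 0 ≤ ∫ t in a..b, Real.exp (-t ^ 2) :=
    intervalIntegral.integral_nonneg hab (fun t _ => Real.exp_nonneg _)
  have h2 : 0 ≤ 2 / Real.sqrt π := by positivity
  unfold erf
  exact mul_le_mul_of_nonneg_left (by linarith) h2

lemma erf_aux_pos {x : ℝ} (hx : 0 < x) : 0 < erf x := by
  have hpos : 0 < ∫ t in (0:ℝ)..x, Real.exp (-t ^ 2) := by
    apply intervalIntegral.intervalIntegral_pos_of_pos_on (erf_aux_cont.intervalIntegrable 0 x)
    · intro t _; exact Real.exp_pos _
    · exact hx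
  have h2 : 0 < 2 / Real.sqrt π := by positivity
  exact mul_pos h2 hpos

/-- `ξ(h₀) < ξ∞` for all admissible `h₀`, and the convergence `ξ(h₀) → ξ∞` as
`h₀ → +∞` is of order `O(1/h₀)`. -/
theorem stmt_11 (ρ c k ℓ γ Dinf α ε h₀star : ℝ)
    (hρ : 0 < ρ) (hc : 0 < c) (hk : 0 < k) (hℓ : 0 < ℓ) (hγ : 0 < γ) (hD : 0 < Dinf)
    (hα : α = k / (ρ * c)) (hε0 : 0 < ε) (hε1 : ε < 1)
    (hstar : h₀star = (1 / Dinf) * Real.sqrt (γ * (1 - ε) * ρ * ℓ * k / 2))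
    (ξ : ℝ → ℝ) (ξinf : ℝ)
    (hξpos : ∀ h₀ > h₀star, 0 < ξ h₀)
    (hξeq : ∀ h₀ > h₀star,
      (Dinf * c / (ℓ * Real.sqrt π)) * Real.exp (-(ξ h₀) ^ 2) /
          (k / (h₀ * Real.sqrt (π * α)) + erf (ξ h₀)) =
        ξ h₀ + (γ * (1 - ε) * Real.sqrt π / (2 * Dinf)) *
          (k / (h₀ * Real.sqrt (π * α)) + erf (ξ h₀)) * Real.exp ((ξ h₀) ^ 2))
    (hξuniq : ∀ h₀ > h₀star, ∀ y > (0:ℝ),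
      (Dinf * c / (ℓ * Real.sqrt π)) * Real.exp (-y ^ 2) /
          (k / (h₀ * Real.sqrt (π * α)) + erf y) =
        y + (γ * (1 - ε) * Real.sqrt π / (2 * Dinf)) *
          (k / (h₀ * Real.sqrt (π * α)) + erf y) * Real.exp (y ^ 2) → y = ξ h₀)
    -- `ξ∞` is the unique positive solution of the equation with `k/(h₀√(πα))` replaced by `0`
    (hξinfpos : 0 < ξinf)
    (hξinfeq : (Dinf * c / (ℓ * Real.sqrt π)) * Real.exp (-ξinf ^ 2) / erf ξinf =
      ξinf + (γ * (1 - ε) * Real.sqrt π / (2 * Dinf)) * erf ξinf * Real.exp (ξinf ^ 2))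
    (hξinfuniq : ∀ y > (0:ℝ),
      (Dinf * c / (ℓ * Real.sqrt π)) * Real.exp (-y ^ 2) / erf y =
        y + (γ * (1 - ε) * Real.sqrt π / (2 * Dinf)) * erf y * Real.exp (y ^ 2) → y = ξinf) :
    (∀ h₀ > h₀star, ξ h₀ < ξinf) ∧
    ∃ C > (0:ℝ), ∃ H > (0:ℝ), ∀ h₀ ≥ H, 0 < ξinf - ξ h₀ ∧ ξinf - ξ h₀ ≤ C / h₀ := by
  have hπ : 0 < Real.sqrt π := Real.sqrt_pos.mpr Real.pi_pos
  have hε : 0 < 1 - ε := by linarith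
  have hαpos : 0 < α := by rw [hα]; positivity
  have hs : 0 < Real.sqrt (π * α) := Real.sqrt_pos.mpr (by positivity)
  have hstar0 : 0 ≤ h₀star := by rw [hstar]; positivity
  set A : ℝ := Dinf * c / (ℓ * Real.sqrt π) with hAdef
  set B : ℝ := γ * (1 - ε) * Real.sqrt π / (2 * Dinf) with hBdef
  have hA : 0 < A := by rw [hAdef]; positivity
  have hB : 0 < B := by rw [hBdef]; positivity
  set K : ℝ := k / Real.sqrt (π * α) with hKdef
  have hK : 0 < K := by rw [hKdef]; positivity
  set v : ℝ := erf ξinf with hvdef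
  set q : ℝ := Real.exp (-ξinf ^ 2) with hqdef
  set Q : ℝ := Real.exp (ξinf ^ 2) with hQdef
  have hv : 0 < v := erf_aux_pos hξinfpos
  have hq : 0 < q := Real.exp_pos _
  have hQ : 0 < Q := Real.exp_pos _
  set C : ℝ := K * (A * q / v ^ 2 + B * Q) with hCdef
  have hC : 0 < C := by rw [hCdef]; positivity
  have key : ∀ h₀ > h₀star, ξ h₀ < ξinf ∧ ξinf - ξ h₀ ≤ C / h₀ := by
    intro h₀ hh
    have hh0 : 0 < h₀ := lt_of_le_of_lt hstar0 hh
    have e1 := hξeq h₀ hh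
    have e2 := hξinfeq
    set x : ℝ := ξ h₀ with hxdef
    have hx : 0 < x := hξpos h₀ hh
    set β : ℝ := k / (h₀ * Real.sqrt (π * α)) with hβdef
    have hβ : 0 < β := by rw [hβdef]; positivity
    have hβK : β = K / h₀ := by rw [hβdef, hKdef, div_div, mul_comm]
    set u : ℝ := erf x with hudef
    have hu : 0 < u := erf_aux_pos hx
    set p : ℝ := Real.exp (-x ^ 2) with hpdef
    set P : ℝ := Real.exp (x ^ 2) with hPdef
    have hp : 0 < p := Real.exp_pos _
    have hP : 0 < P := Real.exp_pos _
    -- e1 : A * p / (β + u) = x + B * (β + u) * P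
    -- e2 : A * q / v = ξinf + B * v * Q
    have hlt : x < ξinf := by
      by_contra hcon
      push_neg at hcon
      have huv : v ≤ u := erf_aux_mono hcon
      have hsq : ξinf ^ 2 ≤ x ^ 2 := pow_le_pow_left₀ hξinfpos.le hcon 2
      have hpq : p ≤ q := by
        rw [hpdef, hqdef]
        exact Real.exp_le_exp.mpr (by linarith)
      have hPQ : Q ≤ P := by
        rw [hPdef, hQdef]
        exact Real.exp_le_exp.mpr hsq
      have c1 : A * p / (β + u) ≤ A * q / (β + v) :=
        div_le_div₀ (by positivity) (mul_le_mul_of_nonneg_left hpq hA.le) (by positivity)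
          (by linarith)
      have c2 : A * q / (β + v) < A * q / v :=
        div_lt_div_of_pos_left (by positivity) hv (by linarith)
      have c3 : ξinf + B * v * Q ≤ x + B * (β + u) * P := by
        have h1 : v * Q ≤ u * P := mul_le_mul huv hPQ hQ.le hu.le
        have h2 : B * (v * Q) ≤ B * (u * P) := mul_le_mul_of_nonneg_left h1 hB.le
        have h3 : 0 ≤ B * (β * P) := by positivity
        have h4 : x + B * (β + u) * P = x + B * (β * P) + B * (u * P) := by ring
        have h5 : ξinf + B * v * Q = ξinf + B * (v * Q) := by ring
        linarith
      linarith
    refine ⟨hlt, ?_⟩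
    have hvu : u ≤ v := erf_aux_mono hlt.le
    have hsq : x ^ 2 ≤ ξinf ^ 2 := pow_le_pow_left₀ hx.le hlt.le 2
    have hqp : q ≤ p := by
      rw [hpdef, hqdef]
      exact Real.exp_le_exp.mpr (by linarith)
    have hQP : P ≤ Q := by
      rw [hPdef, hQdef]
      exact Real.exp_le_exp.mpr hsq
    have d1 : A * q / (β + v) ≤ A * p / (β + u) :=
      div_le_div₀ (by positivity) (mul_le_mul_of_nonneg_left hqp hA.le) (by positivity)
        (by linarith)
    have d2 : A * q / v - A * q / (β + v) = A * q * β / (v * (β + v)) := by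
      field_simp
      ring
    have d3 : A * q * β / (v * (β + v)) ≤ A * q * β / (v * v) := by
      exact div_le_div_of_nonneg_left (by positivity) (by positivity)
        (mul_le_mul_of_nonneg_left (by linarith) hv.le)
    have d3' : A * q * β / (v * v) = β * (A * q / v ^ 2) := by
      field_simp
    have d4 : B * (β + u) * P - B * v * Q ≤ β * (B * Q) := by
      have h1 : u * P ≤ v * Q := mul_le_mul hvu hQP hP.le hv.le
      have h2 : B * (u * P) ≤ B * (v * Q) := mul_le_mul_of_nonneg_left h1 hB.le
      have h3 : β * P ≤ β * Q := mul_le_mul_of_nonneg_left hQP hβ.le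
      have h4 : B * (β * P) ≤ B * (β * Q) := mul_le_mul_of_nonneg_left h3 hB.le
      have h5 : B * (β + u) * P = B * (β * P) + B * (u * P) := by ring
      have h6 : B * v * Q = B * (v * Q) := by ring
      have h7 : β * (B * Q) = B * (β * Q) := by ring
      linarith
    -- ξinf - x = (A*q/v - B*v*Q) - (A*p/(β+u) - B*(β+u)*P)
    have main : ξinf - x ≤ β * (A * q / v ^ 2 + B * Q) := by
      have h5 : A * q / v - A * p / (β + u) ≤ β * (A * q / v ^ 2) := by
        linarith [d1, d2, d3, d3']
      have hexp : β * (A * q / v ^ 2 + B * Q) = β * (A * q / v ^ 2) + β * (B * Q) := by ring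
      linarith [h5, d4, e1, e2]
    rw [hβK] at main
    have hfin : K / h₀ * (A * q / v ^ 2 + B * Q) = C / h₀ := by
      rw [hCdef]; ring
    rw [hfin] at main
    exact main
  refine ⟨fun h₀ hh => (key h₀ hh).1, C, hC, h₀star + 1, by linarith, fun h₀ hh => ?_⟩
  have hh' : h₀ > h₀star := by linarith
  exact ⟨by linarith [(key h₀ hh').1], (key h₀ hh').2⟩
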